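/- (ℤ₂×ℤ₂ grading) Let (a,b,c) ∈ ℕ³ be admissible and suppose p is a polynomial in three variables y, x, z over ℂ satisfying χ_{a,b}^c(x₁,x₂) = p(tr(x₂), tr(x₁), tr(x₁x₂⁻¹)) for all x₁, x₂ ∈ SL(2,ℂ). Then every monomial y^j x^i z^k occurring with nonzero coefficient in p satisfies i + k ≡ a (mod 2) and j + k ≡ b (mod 2). -/

import Mathlib

open Matrix Finset

noncomputable section

abbrev SL2 : Type := Matrix.SpecialLinearGroup (Fin 2) ℂ

/-- Matrix entry of the representation ρₙ on Vₙ in the basis `n_k = X^k Y^{n-k}`: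
`rhoFun n g l k` is the coefficient of `X^l Y^{n-l}` in
`(g₁₁ X + g₂₁ Y)^k (g₁₂ X + g₂₂ Y)^{n-k}`. -/
def rhoFun (n : ℕ) (g : SL2) (l k : ℕ) : ℂ :=
  MvPolynomial.coeff (Finsupp.single (0 : Fin 2) l + Finsupp.single (1 : Fin 2) (n - l))
    (MvPolynomial.aeval
      ![MvPolynomial.C (g.1 0 0) * MvPolynomial.X (0 : Fin 2) +
          MvPolynomial.C (g.1 1 0) * MvPolynomial.X 1,
        MvPolynomial.C (g.1 0 1) * MvPolynomial.X 0 +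
          MvPolynomial.C (g.1 1 1) * MvPolynomial.X 1]
      ((MvPolynomial.X (0 : Fin 2) : MvPolynomial (Fin 2) ℂ) ^ k * MvPolynomial.X 1 ^ (n - k)))

/-- A triple `(a,b,c)` of naturals is admissible: `(−a+b+c)/2, (a−b+c)/2, (a+b−c)/2 ∈ ℕ`. -/
def Admissible (a b c : ℕ) : Prop :=
  a ≤ b + c ∧ b ≤ a + c ∧ c ≤ a + b ∧ (a + b + c) % 2 = 0

instance : ∀ a b c : ℕ, Decidable (Admissible a b c) := fun a b c => by
  unfold Admissible; infer_instance

/-- The coefficient of `a_p ⊗ b_q` in `ι(c_k)`, where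
`ι : V_c → V_a ⊗ V_b` is the Clebsch-Gordan injection
`ι(c_k) = C(c,k)⁻¹ Σ (−1)^m C(β,i) C(α,j) C(γ,m) a_{i+γ−m} ⊗ b_{j+m}`
(with `α = (−a+b+c)/2`, `β = (a−b+c)/2`, `γ = (a+b−c)/2`). -/
def iotaCoeff (a b c k p q : ℕ) : ℂ :=
  ((c.choose k : ℂ))⁻¹ *
    ∑ i ∈ Finset.range ((a + c - b) / 2 + 1),
      ∑ j ∈ Finset.range ((b + c - a) / 2 + 1),
        ∑ m ∈ Finset.range ((a + b - c) / 2 + 1),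
          if i + j = k ∧ p = i + (a + b - c) / 2 - m ∧ q = j + m then
            (-1 : ℂ) ^ m * (((a + c - b) / 2).choose i : ℂ) *
              (((b + c - a) / 2).choose j : ℂ) * (((a + b - c) / 2).choose m : ℂ)
          else 0

/-- `Tcoeff a b c x₁ x₂ k p q` is the coefficient of `a_p ⊗ b_q` in
`(ρ_a(x₁) ⊗ ρ_b(x₂))(ι(c_k))`. -/
def Tcoeff (a b c : ℕ) (x₁ x₂ : SL2) (k p q : ℕ) : ℂ :=
  ∑ p' ∈ Finset.range (a + 1), ∑ q' ∈ Finset.range (b + 1),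
    rhoFun a x₁ p p' * rhoFun b x₂ q q' * iotaCoeff a b c k p' q'

/-- The central function `χ_{a,b}^c : SL(2,ℂ) × SL(2,ℂ) → ℂ`, defined to be `0` when
`(a,b,c)` is not admissible. -/
def centralFn (a b c : ℕ) (x₁ x₂ : SL2) : ℂ :=
  if Admissible a b c then
    ∑ k ∈ Finset.range (c + 1),
      ∑ i ∈ Finset.range ((a + c - b) / 2 + 1),
        ∑ j ∈ Finset.range ((b + c - a) / 2 + 1),
          ∑ m ∈ Finset.range ((a + b - c) / 2 + 1),
            if i + j = k then
              (-1 : ℂ) ^ m * (((a + c - b) / 2).choose i : ℂ) *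
                  (((b + c - a) / 2).choose j : ℂ) * (((a + b - c) / 2).choose m : ℂ) /
                  ((a.choose (i + (a + b - c) / 2 - m) : ℂ) * (b.choose (j + m) : ℂ)) *
                Tcoeff a b c x₁ x₂ k (i + (a + b - c) / 2 - m) (j + m)
            else 0
  else 0

/-! ### Auxiliary lemmas -/

/-- Negation of an element of `SL(2,ℂ)`. -/
def negSL (g : SL2) : SL2 := ⟨-g.1, by rw [Matrix.det_neg]; simp [g.2]⟩

lemma rhoFun_neg (n : ℕ) (g : SL2) (l k : ℕ) (hk : k ≤ n) :
    rhoFun n (negSL g) l k = (-1 : ℂ)^n * rhoFun n g l k := by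
  unfold rhoFun negSL
  simp only [Matrix.neg_apply, map_neg, _root_.map_mul, map_pow, MvPolynomial.aeval_X,
    Matrix.cons_val_zero, Matrix.cons_val_one, Matrix.head_cons]
  have key : ∀ a₁ a₂ b₁ b₂ : ℂ,
      (-MvPolynomial.C a₁ * MvPolynomial.X (0 : Fin 2) + -MvPolynomial.C a₂ * MvPolynomial.X 1) ^ k *
        (-MvPolynomial.C b₁ * MvPolynomial.X 0 + -MvPolynomial.C b₂ * MvPolynomial.X 1) ^ (n - k) =
      MvPolynomial.C ((-1 : ℂ)^n) *
        ((MvPolynomial.C a₁ * MvPolynomial.X 0 + MvPolynomial.C a₂ * MvPolynomial.X 1) ^ k *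
         (MvPolynomial.C b₁ * MvPolynomial.X 0 + MvPolynomial.C b₂ * MvPolynomial.X 1) ^ (n - k)) := by
    intro a₁ a₂ b₁ b₂
    set u := MvPolynomial.C a₁ * MvPolynomial.X (0 : Fin 2) + MvPolynomial.C a₂ * MvPolynomial.X 1
    set v := MvPolynomial.C b₁ * MvPolynomial.X (0 : Fin 2) + MvPolynomial.C b₂ * MvPolynomial.X 1
    have h1 : (-MvPolynomial.C a₁ * MvPolynomial.X (0 : Fin 2) + -MvPolynomial.C a₂ * MvPolynomial.X 1) = -u := by
      simp [u]; ring
    have h2 : (-MvPolynomial.C b₁ * MvPolynomial.X (0 : Fin 2) + -MvPolynomial.C b₂ * MvPolynomial.X 1) = -v := by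
      simp [v]; ring
    rw [h1, h2,
      show ((-u)^k * (-v)^(n-k)) = (-1 : MvPolynomial (Fin 2) ℂ)^(k+(n-k)) * (u^k * v^(n-k)) by
        rw [show -u = (-1 : MvPolynomial (Fin 2) ℂ) * u by ring,
            show -v = (-1 : MvPolynomial (Fin 2) ℂ) * v by ring, mul_pow, mul_pow, pow_add]
        ring,
      Nat.add_sub_cancel' hk]
    simp [← MvPolynomial.C_pow]
  rw [key, MvPolynomial.coeff_C_mul]

lemma Tcoeff_neg_left (a b c : ℕ) (x₁ x₂ : SL2) (k p q : ℕ) :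
    Tcoeff a b c (negSL x₁) x₂ k p q = (-1 : ℂ)^a * Tcoeff a b c x₁ x₂ k p q := by
  unfold Tcoeff
  rw [Finset.mul_sum]
  refine Finset.sum_congr rfl fun p' hp' => ?_
  rw [Finset.mul_sum]
  refine Finset.sum_congr rfl fun q' hq' => ?_
  rw [rhoFun_neg a x₁ p p' (Nat.lt_succ_iff.mp (Finset.mem_range.mp hp'))]
  ring

lemma Tcoeff_neg_right (a b c : ℕ) (x₁ x₂ : SL2) (k p q : ℕ) :
    Tcoeff a b c x₁ (negSL x₂) k p q = (-1 : ℂ)^b * Tcoeff a b c x₁ x₂ k p q := by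
  unfold Tcoeff
  rw [Finset.mul_sum]
  refine Finset.sum_congr rfl fun p' hp' => ?_
  rw [Finset.mul_sum]
  refine Finset.sum_congr rfl fun q' hq' => ?_
  rw [rhoFun_neg b x₂ q q' (Nat.lt_succ_iff.mp (Finset.mem_range.mp hq'))]
  ring

lemma centralFn_neg_left (a b c : ℕ) (h : Admissible a b c) (x₁ x₂ : SL2) :
    centralFn a b c (negSL x₁) x₂ = (-1 : ℂ)^a * centralFn a b c x₁ x₂ := by
  unfold centralFn
  rw [if_pos h, if_pos h]
  simp only [Finset.mul_sum]
  refine Finset.sum_congr rfl fun k _ => Finset.sum_congr rfl fun i _ =>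
    Finset.sum_congr rfl fun j _ => Finset.sum_congr rfl fun m _ => ?_
  split_ifs with hij
  · rw [Tcoeff_neg_left]; ring
  · rw [mul_zero]

lemma centralFn_neg_right (a b c : ℕ) (h : Admissible a b c) (x₁ x₂ : SL2) :
    centralFn a b c x₁ (negSL x₂) = (-1 : ℂ)^b * centralFn a b c x₁ x₂ := by
  unfold centralFn
  rw [if_pos h, if_pos h]
  simp only [Finset.mul_sum]
  refine Finset.sum_congr rfl fun k _ => Finset.sum_congr rfl fun i _ =>
    Finset.sum_congr rfl fun j _ => Finset.sum_congr rfl fun m _ => ?_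
  split_ifs with hij
  · rw [Tcoeff_neg_right]; ring
  · rw [mul_zero]

lemma negSL_inv (x : SL2) : (negSL x)⁻¹ = negSL x⁻¹ := by
  symm
  apply eq_inv_of_mul_eq_one_right
  apply Subtype.ext
  show (negSL x * negSL x⁻¹ : SL2).1 = (1 : SL2).1
  rw [Matrix.SpecialLinearGroup.coe_mul]
  show (-(x.1)) * (-(x⁻¹ : SL2).1) = (1 : SL2).1
  rw [neg_mul_neg, ← Matrix.SpecialLinearGroup.coe_mul, mul_inv_cancel]

lemma trace_negSL (x : SL2) :
    Matrix.trace ((negSL x : SL2) : Matrix (Fin 2) (Fin 2) ℂ) =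
      -Matrix.trace ((x : SL2) : Matrix (Fin 2) (Fin 2) ℂ) := by
  show Matrix.trace (-(x.1)) = _
  rw [Matrix.trace_neg]

lemma trace_negSL_mul_left (x y : SL2) :
    Matrix.trace ((negSL x * y : SL2) : Matrix (Fin 2) (Fin 2) ℂ) =
      -Matrix.trace ((x * y : SL2) : Matrix (Fin 2) (Fin 2) ℂ) := by
  rw [Matrix.SpecialLinearGroup.coe_mul, Matrix.SpecialLinearGroup.coe_mul]
  show Matrix.trace ((-(x.1)) * y.1) = _
  rw [neg_mul, Matrix.trace_neg]

lemma trace_mul_negSL_right (x y : SL2) :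
    Matrix.trace ((x * negSL y : SL2) : Matrix (Fin 2) (Fin 2) ℂ) =
      -Matrix.trace ((x * y : SL2) : Matrix (Fin 2) (Fin 2) ℂ) := by
  rw [Matrix.SpecialLinearGroup.coe_mul, Matrix.SpecialLinearGroup.coe_mul]
  show Matrix.trace (x.1 * (-(y.1))) = _
  rw [mul_neg, Matrix.trace_neg]

/-- Fricke surjectivity: every triple of traces is realized. -/
lemma exists_traces (y x z : ℂ) : ∃ x₁ x₂ : SL2,
    Matrix.trace ((x₁ : SL2) : Matrix (Fin 2) (Fin 2) ℂ) = x ∧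
    Matrix.trace ((x₂ : SL2) : Matrix (Fin 2) (Fin 2) ℂ) = y ∧
    Matrix.trace ((x₁ * x₂⁻¹ : SL2) : Matrix (Fin 2) (Fin 2) ℂ) = z := by
  obtain ⟨v, hv0, hv⟩ : ∃ v : ℂ, v ≠ 0 ∧ v*v + z*v + 1 = 0 := by
    obtain ⟨v, hv⟩ := IsAlgClosed.exists_root (k := ℂ)
      (Polynomial.C 1 * Polynomial.X^2 + Polynomial.C z * Polynomial.X + Polynomial.C 1)
      (by rw [Polynomial.degree_quadratic one_ne_zero]; norm_num)
    simp only [Polynomial.IsRoot, Polynomial.eval_add, Polynomial.eval_mul, Polynomial.eval_pow,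
      Polynomial.eval_C, Polynomial.eval_X, one_mul] at hv
    refine ⟨v, ?_, by linear_combination hv⟩
    rintro rfl; simp at hv
  refine ⟨⟨!![x, -1; 1, 0], by simp [Matrix.det_fin_two_of]⟩,
          ⟨!![y, v; -v⁻¹, 0], by simp [Matrix.det_fin_two_of, mul_inv_cancel₀ hv0]⟩, ?_, ?_, ?_⟩
  · simp [Matrix.trace_fin_two_of]
  · simp [Matrix.trace_fin_two_of]
  · show Matrix.trace (!![x, -1; 1, 0] * adjugate !![y, v; -v⁻¹, 0]) = z
    rw [Matrix.adjugate_fin_two_of, Matrix.mul_fin_two, Matrix.trace_fin_two_of]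
    field_simp
    linear_combination (-1 : ℂ) * hv

lemma coeff_aeval_scale (ε : Fin 3 → ℂ) (p : MvPolynomial (Fin 3) ℂ) (d : Fin 3 →₀ ℕ) :
    MvPolynomial.coeff d
        (MvPolynomial.aeval (fun i => MvPolynomial.C (ε i) * MvPolynomial.X i) p)
      = (∏ i, ε i ^ d i) * p.coeff d := by
  induction p using MvPolynomial.induction_on' with
  | monomial s a =>
    rw [MvPolynomial.aeval_monomial]
    have hprod : (s.prod fun i e => (MvPolynomial.C (ε i) * MvPolynomial.X i) ^ e)
        = MvPolynomial.C (∏ i, ε i ^ s i) *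
          (s.prod fun i (e : ℕ) => (MvPolynomial.X i : MvPolynomial (Fin 3) ℂ) ^ e) := by
      rw [Finsupp.prod_fintype _ _ (fun i => by simp),
        Finsupp.prod_fintype _ _ (fun i => by simp)]
      simp_rw [mul_pow, ← MvPolynomial.C_pow]
      rw [Finset.prod_mul_distrib, ← map_prod]
    rw [hprod, show (algebraMap ℂ (MvPolynomial (Fin 3) ℂ)) a = MvPolynomial.C a from rfl,
      show (s.prod fun i (e : ℕ) => (MvPolynomial.X i : MvPolynomial (Fin 3) ℂ) ^ e)
        = MvPolynomial.monomial s (1 : ℂ) by rw [MvPolynomial.monomial_eq, MvPolynomial.C_1, one_mul],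
      MvPolynomial.coeff_C_mul, MvPolynomial.coeff_C_mul, MvPolynomial.coeff_monomial,
      MvPolynomial.coeff_monomial]
    by_cases hsd : s = d
    · subst hsd; simp [mul_comm]
    · simp [hsd]
  | add p q hp hq =>
    rw [map_add, MvPolynomial.coeff_add, MvPolynomial.coeff_add, hp, hq, mul_add]

lemma key_parity (s : ℂ) (ε : Fin 3 → ℂ) (p : MvPolynomial (Fin 3) ℂ)
    (h : ∀ v : Fin 3 → ℂ,
      MvPolynomial.eval (fun i => ε i * v i) p = s * MvPolynomial.eval v p)
    (d : Fin 3 →₀ ℕ) : (∏ i, ε i ^ d i) * p.coeff d = s * p.coeff d := by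
  have hq : (MvPolynomial.aeval (fun i => MvPolynomial.C (ε i) * MvPolynomial.X i) p
        : MvPolynomial (Fin 3) ℂ) = MvPolynomial.C s * p := by
    apply MvPolynomial.funext
    intro v
    have h1 : MvPolynomial.eval v
        (MvPolynomial.aeval (fun i => MvPolynomial.C (ε i) * MvPolynomial.X i) p)
        = MvPolynomial.eval (fun i => ε i * v i) p := by
      show MvPolynomial.aeval v
        (MvPolynomial.bind₁ (fun i => MvPolynomial.C (ε i) * MvPolynomial.X i) p) = _
      rw [MvPolynomial.aeval_bind₁]
      show MvPolynomial.eval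
        (fun i => MvPolynomial.eval v (MvPolynomial.C (ε i) * MvPolynomial.X i)) p = _
      rw [show (fun i => MvPolynomial.eval v (MvPolynomial.C (ε i) * MvPolynomial.X i))
        = (fun i => ε i * v i) from funext fun i => by simp]
    rw [h1, h v, MvPolynomial.eval_mul, MvPolynomial.eval_C]
  have := congrArg (MvPolynomial.coeff d) hq
  rwa [coeff_aeval_scale, MvPolynomial.coeff_C_mul] at this

lemma neg_one_pow_parity (m n : ℕ) (h : ((-1 : ℂ))^m = (-1 : ℂ)^n) : m % 2 = n % 2 := by
  rcases Nat.even_or_odd m with hm | hm <;> rcases Nat.even_or_odd n with hn | hn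
  · rw [Nat.even_iff.mp hm, Nat.even_iff.mp hn]
  · exfalso; rw [hm.neg_one_pow, hn.neg_one_pow] at h; norm_num at h
  · exfalso; rw [hm.neg_one_pow, hn.neg_one_pow] at h; norm_num at h
  · rw [Nat.odd_iff.mp hm, Nat.odd_iff.mp hn]

/-- ℤ₂×ℤ₂-grading: if `χ_{a,b}^c = p(tr(x₂), tr(x₁), tr(x₁x₂⁻¹))` with `(a,b,c)`
admissible, then every monomial `y^j x^i z^k` occurring in `p` satisfies
`i + k ≡ a (mod 2)` and `j + k ≡ b (mod 2)`. -/
theorem centralFn_grading (a b c : ℕ) (h : Admissible a b c) (p : MvPolynomial (Fin 3) ℂ)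
    (hp : ∀ x₁ x₂ : SL2, centralFn a b c x₁ x₂ =
      MvPolynomial.eval
        ![Matrix.trace (x₂ : Matrix (Fin 2) (Fin 2) ℂ),
          Matrix.trace (x₁ : Matrix (Fin 2) (Fin 2) ℂ),
          Matrix.trace ((x₁ * x₂⁻¹ : SL2) : Matrix (Fin 2) (Fin 2) ℂ)] p) :
    ∀ d ∈ p.support,
      (d 1 + d 2) % 2 = a % 2 ∧ (d 0 + d 2) % 2 = b % 2 := by
  intro d hd
  have hcoeff : p.coeff d ≠ 0 := MvPolynomial.mem_support_iff.mp hd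
  have hA : ∀ v : Fin 3 → ℂ,
      MvPolynomial.eval (fun i => (![1, -1, -1] : Fin 3 → ℂ) i * v i) p
        = (-1 : ℂ)^a * MvPolynomial.eval v p := by
    intro v
    obtain ⟨x₁, x₂, h1, h2, h3⟩ := exists_traces (v 0) (v 1) (v 2)
    have e0 := hp x₁ x₂
    rw [show ![Matrix.trace ((x₂ : SL2) : Matrix (Fin 2) (Fin 2) ℂ),
          Matrix.trace ((x₁ : SL2) : Matrix (Fin 2) (Fin 2) ℂ),
          Matrix.trace ((x₁ * x₂⁻¹ : SL2) : Matrix (Fin 2) (Fin 2) ℂ)] = v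
        from funext fun i => by
          fin_cases i
          · simpa using h2
          · simpa using h1
          · simpa using h3] at e0
    have hneg := hp (negSL x₁) x₂
    rw [show ![Matrix.trace ((x₂ : SL2) : Matrix (Fin 2) (Fin 2) ℂ),
          Matrix.trace (((negSL x₁) : SL2) : Matrix (Fin 2) (Fin 2) ℂ),
          Matrix.trace ((negSL x₁ * x₂⁻¹ : SL2) : Matrix (Fin 2) (Fin 2) ℂ)]
        = (fun i => (![1, -1, -1] : Fin 3 → ℂ) i * v i)
        from funext fun i => by
          fin_cases i
          · simpa using h2
          · have : Matrix.trace (((negSL x₁) : SL2) : Matrix (Fin 2) (Fin 2) ℂ)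
                = -1 * v 1 := by rw [trace_negSL, h1]; ring
            simpa using this
          · have : Matrix.trace ((negSL x₁ * x₂⁻¹ : SL2) : Matrix (Fin 2) (Fin 2) ℂ)
                = -1 * v 2 := by rw [trace_negSL_mul_left, h3]; ring
            simpa using this] at hneg
    rw [centralFn_neg_left a b c h, e0] at hneg
    exact hneg.symm
  have hB : ∀ v : Fin 3 → ℂ,
      MvPolynomial.eval (fun i => (![-1, 1, -1] : Fin 3 → ℂ) i * v i) p
        = (-1 : ℂ)^b * MvPolynomial.eval v p := by
    intro v
    obtain ⟨x₁, x₂, h1, h2, h3⟩ := exists_traces (v 0) (v 1) (v 2)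
    have e0 := hp x₁ x₂
    rw [show ![Matrix.trace ((x₂ : SL2) : Matrix (Fin 2) (Fin 2) ℂ),
          Matrix.trace ((x₁ : SL2) : Matrix (Fin 2) (Fin 2) ℂ),
          Matrix.trace ((x₁ * x₂⁻¹ : SL2) : Matrix (Fin 2) (Fin 2) ℂ)] = v
        from funext fun i => by
          fin_cases i
          · simpa using h2
          · simpa using h1
          · simpa using h3] at e0
    have hneg := hp x₁ (negSL x₂)
    rw [show ![Matrix.trace (((negSL x₂) : SL2) : Matrix (Fin 2) (Fin 2) ℂ),
          Matrix.trace ((x₁ : SL2) : Matrix (Fin 2) (Fin 2) ℂ),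
          Matrix.trace ((x₁ * (negSL x₂)⁻¹ : SL2) : Matrix (Fin 2) (Fin 2) ℂ)]
        = (fun i => (![-1, 1, -1] : Fin 3 → ℂ) i * v i)
        from funext fun i => by
          fin_cases i
          · have : Matrix.trace (((negSL x₂) : SL2) : Matrix (Fin 2) (Fin 2) ℂ)
                = -1 * v 0 := by rw [trace_negSL, h2]; ring
            simpa using this
          · simpa using h1
          · have : Matrix.trace ((x₁ * (negSL x₂)⁻¹ : SL2) : Matrix (Fin 2) (Fin 2) ℂ)
                = -1 * v 2 := by rw [negSL_inv, trace_mul_negSL_right, h3]; ring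
            simpa using this] at hneg
    rw [centralFn_neg_right a b c h, e0] at hneg
    exact hneg.symm
  have keyA := key_parity ((-1 : ℂ)^a) ![1, -1, -1] p hA d
  have keyB := key_parity ((-1 : ℂ)^b) ![-1, 1, -1] p hB d
  rw [Fin.prod_univ_three] at keyA keyB
  simp only [Matrix.cons_val_zero, Matrix.cons_val_one, Matrix.head_cons, one_pow, one_mul,
    Matrix.cons_val_two, Matrix.tail_cons] at keyA keyB
  have eA : ((-1 : ℂ))^(d 1 + d 2) = (-1 : ℂ)^a := by
    have := mul_right_cancel₀ hcoeff keyA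
    rw [pow_add]; linear_combination this
  have eB : ((-1 : ℂ))^(d 0 + d 2) = (-1 : ℂ)^b := by
    have := mul_right_cancel₀ hcoeff keyB
    rw [pow_add]; linear_combination this
  exact ⟨neg_one_pow_parity _ _ eA, neg_one_pow_parity _ _ eB⟩

end
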